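/- A squarefree positive integer n is φ-practical if and only if it is weakly φ-practical. -/

import Mathlib

/-- A positive integer `n` is φ-practical if every integer `m` with `1 ≤ m ≤ n`
is a sum of totients of a subset of the divisors of `n`. -/
def IsPhiPractical (n : ℕ) : Prop :=
  0 < n ∧ ∀ m : ℕ, 1 ≤ m → m ≤ n →
    ∃ D : Finset ℕ, D ⊆ n.divisors ∧ m = ∑ d ∈ D, Nat.totient d

/-- A positive integer `n = p₁^{e₁} ⋯ p_k^{e_k}` (primes increasing) is weakly
φ-practical if `p_{i+1} ≤ m_i + 2` for all `i`, where `m_i = p₁^{e₁} ⋯ p_i^{e_i}`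
(and `m₀ = 1`). -/
def IsWeaklyPhiPractical (n : ℕ) : Prop :=
  0 < n ∧ ∀ p : ℕ, p.Prime → p ∣ n →
    p ≤ (∏ q ∈ n.primeFactors.filter (fun q => q < p), q ^ n.factorization q) + 2

private lemma prod_pow_fact_eq {n : ℕ} (hsf : Squarefree n) {S : Finset ℕ}
    (hS : S ⊆ n.primeFactors) :
    ∏ q ∈ S, q ^ n.factorization q = ∏ q ∈ S, q := by
  refine Finset.prod_congr rfl fun q hq => ?_
  have hq' := hS hq
  rw [Nat.factorization_eq_one_of_squarefree hsf (Nat.prime_of_mem_primeFactors hq')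
    (Nat.dvd_of_mem_primeFactors hq'), pow_one]

private lemma exists_rep {k : ℕ} (h : IsPhiPractical k) {s : ℕ} (hs : s ≤ k) :
    ∃ D : Finset ℕ, D ⊆ k.divisors ∧ s = ∑ d ∈ D, Nat.totient d := by
  rcases Nat.eq_zero_or_pos s with rfl | hpos
  · exact ⟨∅, by simp, by simp⟩
  · exact h.2 s hpos hs

private lemma weakly_to_practical : ∀ n : ℕ, 0 < n → Squarefree n →
    IsWeaklyPhiPractical n → IsPhiPractical n := by
  intro n
  induction n using Nat.strong_induction_on with
  | _ n ih =>
  intro hn hsf hw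
  rcases eq_or_lt_of_le (show 1 ≤ n from hn) with h1 | h1
  · -- n = 1
    refine ⟨hn, fun m hm1 hmn => ?_⟩
    have hm : m = 1 := by omega
    subst hm
    refine ⟨{1}, ?_, by simp⟩
    have : n = 1 := h1.symm
    subst this
    simp
  -- n ≥ 2
  have hne : n.primeFactors.Nonempty := Nat.nonempty_primeFactors.mpr h1
  set p := n.primeFactors.max' hne with hpdef
  have hpmem : p ∈ n.primeFactors := n.primeFactors.max'_mem hne
  have hp : p.Prime := Nat.prime_of_mem_primeFactors hpmem
  have hpn : p ∣ n := Nat.dvd_of_mem_primeFactors hpmem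
  set m' := n / p with hm'def
  have hn' : m' * p = n := Nat.div_mul_cancel hpn
  have hm'dvd : m' ∣ n := Dvd.intro_left p (by rw [mul_comm]; exact hn')
  have hm'pos : 0 < m' := Nat.div_pos (Nat.le_of_dvd hn hpn) hp.pos
  have hm'sf : Squarefree m' := hsf.squarefree_of_dvd hm'dvd
  have hpm' : ¬ p ∣ m' := by
    intro hdvd
    have : p * p ∣ n := by
      rw [← hn']; exact mul_dvd_mul_right hdvd p
    exact hp.one_lt.ne' (Nat.isUnit_iff.mp (hsf p this))
  have hm'lt : m' < n := by
    rw [← hn']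
    exact (lt_mul_iff_one_lt_right hm'pos).mpr hp.one_lt
  -- prime factors of n split
  have hpf : n.primeFactors = m'.primeFactors ∪ {p} := by
    rw [← hn', Nat.primeFactors_mul hm'pos.ne' hp.pos.ne', hp.primeFactors]
  have hpnotin : p ∉ m'.primeFactors := fun h => hpm' (Nat.dvd_of_mem_primeFactors h)
  have hqltp : ∀ q ∈ m'.primeFactors, q < p := by
    intro q hq
    have hqn : q ∈ n.primeFactors := hpf ▸ Finset.mem_union_left _ hq
    have := n.primeFactors.le_max' q hqn
    exact lt_of_le_of_ne this (fun h => hpnotin (h ▸ hq))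
  -- filtered sets agree below any r ≤ p
  have hfilt : ∀ r : ℕ, r ≤ p →
      n.primeFactors.filter (fun q => q < r) = m'.primeFactors.filter (fun q => q < r) := by
    intro r hr
    ext q
    simp only [Finset.mem_filter, hpf, Finset.mem_union, Finset.mem_singleton]
    constructor
    · rintro ⟨hq | rfl, hlt⟩
      · exact ⟨hq, hlt⟩
      · omega
    · rintro ⟨hq, hlt⟩; exact ⟨Or.inl hq, hlt⟩
  have hfiltp : n.primeFactors.filter (fun q => q < p) = m'.primeFactors := by
    rw [hfilt p le_rfl]
    apply Finset.filter_true_of_mem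
    intro q hq; exact hqltp q hq
  -- p ≤ m' + 2
  have hple : p ≤ m' + 2 := by
    have := hw.2 p hp hpn
    rwa [prod_pow_fact_eq hsf (Finset.filter_subset _ _), hfiltp,
      Nat.prod_primeFactors_of_squarefree hm'sf] at this
  -- m' is weakly φ-practical
  have hw' : IsWeaklyPhiPractical m' := by
    refine ⟨hm'pos, fun q hq hqm' => ?_⟩
    have hqn : q ∣ n := hqm'.trans hm'dvd
    have hqltp' : q < p := hqltp q (Nat.mem_primeFactors.mpr ⟨hq, hqm', hm'pos.ne'⟩)
    have := hw.2 q hq hqn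
    rwa [prod_pow_fact_eq hsf (Finset.filter_subset _ _), hfilt q hqltp'.le,
      ← prod_pow_fact_eq hm'sf (Finset.filter_subset _ _)] at this
  have hP' : IsPhiPractical m' := ih m' hm'lt hm'pos hm'sf hw'
  -- main argument
  refine ⟨hn, fun m hm1 hmn => ?_⟩
  set P := p - 1 with hPdef
  have hPpos : 0 < P := by have := hp.two_le; omega
  set s := min (m / P) m' with hsdef
  set t := m - P * s with htdef
  have hPs : P * s ≤ m := by
    calc P * s ≤ P * (m / P) := Nat.mul_le_mul_left P (min_le_left _ _)
    _ ≤ m := Nat.mul_div_le m P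
  have hs : s ≤ m' := min_le_right _ _
  have ht : t ≤ m' := by
    rcases le_or_gt (m / P) m' with hc | hc
    · have hseq : s = m / P := min_eq_left hc
      have hmod := Nat.div_add_mod m P
      have hmlt : m % P < P := Nat.mod_lt m hPpos
      have h5 : P * s = P * (m / P) := by rw [hseq]
      omega
    · have hseq : s = m' := min_eq_right hc.le
      have hPp : P + 1 = p := by have := hp.two_le; omega
      have hkey : m' * p = P * m' + m' := by rw [← hPp]; ring
      have hmle : m ≤ m' * p := hn' ▸ hmn
      calc t = m - P * m' := by rw [htdef, hseq]
      _ ≤ m' * p - P * m' := Nat.sub_le_sub_right hmle _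
      _ = m' := by omega
  obtain ⟨Dt, hDt, hDtsum⟩ := exists_rep hP' ht
  obtain ⟨Ds, hDs, hDssum⟩ := exists_rep hP' hs
  set E := Ds.image (· * p) with hEdef
  have hinj : Set.InjOn (· * p) Ds := fun a _ b _ h => Nat.eq_of_mul_eq_mul_right hp.pos h
  have hdisj : Disjoint Dt E := by
    rw [Finset.disjoint_left]
    intro x hx hxE
    have hxm' : x ∣ m' := Nat.dvd_of_mem_divisors (hDt hx)
    obtain ⟨d, hd, rfl⟩ := Finset.mem_image.mp hxE
    exact hpm' ((Dvd.intro_left d rfl).trans hxm')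
  have hEsum : ∑ d ∈ E, Nat.totient d = s * P := by
    rw [hEdef, Finset.sum_image hinj]
    have : ∀ d ∈ Ds, Nat.totient (d * p) = Nat.totient d * P := by
      intro d hd
      have hdm' : d ∣ m' := Nat.dvd_of_mem_divisors (hDs hd)
      have hcop : Nat.Coprime d p := Nat.Coprime.symm
        ((Nat.Prime.coprime_iff_not_dvd hp).mpr (fun h => hpm' (h.trans hdm')))
      rw [Nat.totient_mul hcop, Nat.totient_prime hp]
    rw [Finset.sum_congr rfl this, ← Finset.sum_mul, ← hDssum]
  refine ⟨Dt ∪ E, ?_, ?_⟩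
  · intro x hx
    rcases Finset.mem_union.mp hx with hx | hx
    · have := Nat.dvd_of_mem_divisors (hDt hx)
      exact Nat.mem_divisors.mpr ⟨this.trans hm'dvd, hn.ne'⟩
    · obtain ⟨d, hd, rfl⟩ := Finset.mem_image.mp hx
      have hdm' : d ∣ m' := Nat.dvd_of_mem_divisors (hDs hd)
      exact Nat.mem_divisors.mpr ⟨hn' ▸ mul_dvd_mul_right hdm' p, hn.ne'⟩
  · rw [Finset.sum_union hdisj, ← hDtsum, hEsum]
    have : s * P = P * s := mul_comm s P
    omega

theorem squarefree_phiPractical_iff_weakly (n : ℕ) (hn : 0 < n)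
    (hsf : Squarefree n) :
    IsPhiPractical n ↔ IsWeaklyPhiPractical n := by
  constructor
  · intro hP
    refine ⟨hn, fun p hp hpn => ?_⟩
    rw [prod_pow_fact_eq hsf (Finset.filter_subset _ _)]
    by_contra hlt
    push_neg at hlt
    set F := n.primeFactors.filter (fun q => q < p) with hFdef
    set m := ∏ q ∈ F, q with hmdef
    have hmd : m ∣ n := by
      calc m ∣ ∏ q ∈ n.primeFactors, q :=
        Finset.prod_dvd_prod_of_subset _ _ _ (Finset.filter_subset _ _)
      _ = n := Nat.prod_primeFactors_of_squarefree hsf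
    have hm0 : m ≠ 0 := fun h => hn.ne' (Nat.eq_zero_of_zero_dvd (h ▸ hmd))
    have hpm : ¬ p ∣ m := by
      intro hdvd
      obtain ⟨q, hq, hpq⟩ := hp.prime.exists_mem_finset_dvd hdvd
      have hqlt : q < p := (Finset.mem_filter.mp hq).2
      have hqp : q ∈ n.primeFactors := (Finset.mem_filter.mp hq).1
      have := (Nat.prime_dvd_prime_iff_eq hp (Nat.prime_of_mem_primeFactors hqp)).mp hpq
      omega
    have hmn : m < n := lt_of_le_of_ne (Nat.le_of_dvd hn hmd) (fun h => hpm (h ▸ hpn))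
    obtain ⟨D, hD, hsum⟩ := hP.2 (m + 1) (by omega) (by omega)
    by_cases hbig : ∃ d ∈ D, ∃ q : ℕ, q.Prime ∧ q ∣ d ∧ p ≤ q
    · obtain ⟨d, hd, q, hq, hqd, hpq⟩ := hbig
      have hd0 : 0 < d := Nat.pos_of_mem_divisors (hD hd)
      have h1 : Nat.totient q ≤ Nat.totient d :=
        Nat.le_of_dvd (Nat.totient_pos.mpr hd0) (Nat.totient_dvd_of_dvd hqd)
      have h2 : Nat.totient d ≤ m + 1 := by
        rw [hsum] at *
        exact Finset.single_le_sum (fun i _ => Nat.zero_le _) hd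
      have h3 : Nat.totient q = q - 1 := Nat.totient_prime hq
      have := hq.two_le
      omega
    · push_neg at hbig
      have hDm : ∀ d ∈ D, d ∣ m := by
        intro d hd
        have hdn : d ∣ n := Nat.dvd_of_mem_divisors (hD hd)
        have hdsf : Squarefree d := hsf.squarefree_of_dvd hdn
        have hsub : d.primeFactors ⊆ F := by
          intro q hq
          have hqp := Nat.prime_of_mem_primeFactors hq
          have hqd := Nat.dvd_of_mem_primeFactors hq
          refine Finset.mem_filter.mpr ⟨Nat.mem_primeFactors.mpr ⟨hqp, hqd.trans hdn, hn.ne'⟩, ?_⟩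
          exact hbig d hd q hqp hqd
        calc d = ∏ q ∈ d.primeFactors, q := (Nat.prod_primeFactors_of_squarefree hdsf).symm
        _ ∣ ∏ q ∈ F, q := Finset.prod_dvd_prod_of_subset _ _ _ hsub
      have hDsub : D ⊆ m.divisors := fun d hd => Nat.mem_divisors.mpr ⟨hDm d hd, hm0⟩
      have hle : ∑ d ∈ D, Nat.totient d ≤ ∑ d ∈ m.divisors, Nat.totient d :=
        Finset.sum_le_sum_of_subset hDsub
      rw [Nat.sum_totient] at hle
      omega
  · exact weakly_to_practical n hn hsf
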